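/- arXiv:2306.09209 — 2 statements merged into one kernel-verified Lean document; each statement's English description precedes it below -/
import Mathlib

section
/- Let ι be a finite nonempty index set, let w : ι → ℝ with w i > 0 for all i, and let a, b : ι → ℝ with a i > b i > 0 for all i. Then the function F(P) = Σ_{i ∈ ι} w i · (log(1 + a i · P i) − log(1 + b i · P i)) is strictly concave on the nonnegative orthant {P : ι → ℝ | ∀ i, P i ≥ 0}. -/
open Real Set

lemma aux_hasDerivAt_term {c : ℝ} {x : ℝ} (hx : 0 < 1 + c * x) :
    HasDerivAt (fun y : ℝ => Real.log (1 + c * y)) (c / (1 + c * x)) x := by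
  have h1 : HasDerivAt (fun y : ℝ => 1 + c * y) c x := by
    simpa using ((hasDerivAt_id x).const_mul c).const_add 1
  simpa [div_eq_inv_mul, Function.comp_def] using (Real.hasDerivAt_log hx.ne').comp x h1

lemma aux_hasDerivAt_frac {c : ℝ} {x : ℝ} (hx : 0 < 1 + c * x) :
    HasDerivAt (fun y : ℝ => c / (1 + c * y)) (-(c ^ 2 / (1 + c * x) ^ 2)) x := by
  have h1 : HasDerivAt (fun y : ℝ => 1 + c * y) c x := by
    simpa using ((hasDerivAt_id x).const_mul c).const_add 1
  have := (h1.div_const 1).inv ?_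
  · have h2 := this.const_mul c
    simp only [div_one] at h2
    convert h2 using 1
    · rfl
    · rfl
    · funext y
      simp [div_eq_mul_inv]
    · ring
  · simpa using hx.ne'

lemma aux_strict {a b : ℝ} (hb : 0 < b) (hba : b < a) :
    StrictConcaveOn ℝ (Set.Ici (0:ℝ))
      (fun x => Real.log (1 + a * x) - Real.log (1 + b * x)) := by
  have ha : 0 < a := hb.trans hba
  have hpos : ∀ (c : ℝ), 0 < c → ∀ x : ℝ, 0 ≤ x → 0 < 1 + c * x := by
    intro c hc x hx
    have := mul_nonneg hc.le hx
    linarith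
  apply strictConcaveOn_of_deriv2_neg (convex_Ici 0)
  · apply ContinuousOn.sub <;>
    · apply ContinuousOn.log (by fun_prop)
      intro x hx
      exact (hpos _ (by first | exact ha | exact hb) x hx).ne'
  · intro x hx
    rw [interior_Ici] at hx
    have hx0 : (0:ℝ) ≤ x := le_of_lt hx
    -- first derivative on a neighborhood
    have hEq : deriv (fun y => Real.log (1 + a * y) - Real.log (1 + b * y))
        =ᶠ[nhds x] fun y => a / (1 + a * y) - b / (1 + b * y) := by
      filter_upwards [eventually_gt_nhds hx] with y hy
      exact ((aux_hasDerivAt_term (hpos a ha y hy.le)).sub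
        (aux_hasDerivAt_term (hpos b hb y hy.le))).deriv
    have h2 : deriv^[2] (fun y => Real.log (1 + a * y) - Real.log (1 + b * y)) x
        = -(a ^ 2 / (1 + a * x) ^ 2) - -(b ^ 2 / (1 + b * x) ^ 2) := by
      have := ((aux_hasDerivAt_frac (hpos a ha x hx0)).sub
        (aux_hasDerivAt_frac (hpos b hb x hx0))).deriv
      simp only [Function.iterate_succ, Function.iterate_zero, Function.comp_apply, id_eq]
      rw [hEq.deriv_eq]
      exact this
    rw [h2]
    have hA := hpos a ha x hx0
    have hB := hpos b hb x hx0
    have hlt : b / (1 + b * x) < a / (1 + a * x) := by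
      rw [div_lt_div_iff₀ hB hA]
      nlinarith
    have hnn : 0 ≤ b / (1 + b * x) := div_nonneg hb.le hB.le
    have := mul_lt_mul' hlt.le hlt hnn (div_pos ha hA)
    have hsq : b ^ 2 / (1 + b * x) ^ 2 < a ^ 2 / (1 + a * x) ^ 2 := by
      rw [← div_pow, ← div_pow]
      exact pow_lt_pow_left₀ hlt hnn two_ne_zero
    linarith

theorem stmt_6 {ι : Type*} [Fintype ι] [Nonempty ι] (w a b : ι → ℝ)
    (hw : ∀ i, 0 < w i) (hb : ∀ i, 0 < b i) (hba : ∀ i, b i < a i) :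
    StrictConcaveOn ℝ {P : ι → ℝ | ∀ i, 0 ≤ P i}
      (fun P : ι → ℝ =>
        ∑ i, w i * (Real.log (1 + a i * P i) - Real.log (1 + b i * P i))) := by
  have hg : ∀ i, StrictConcaveOn ℝ (Set.Ici (0:ℝ))
      (fun x => w i * (Real.log (1 + a i * x) - Real.log (1 + b i * x))) := by
    intro i
    obtain ⟨hc, hstrict⟩ := aux_strict (hb i) (hba i)
    refine ⟨hc, ?_⟩
    intro x hx y hy hxy s t hs ht hst
    have h := hstrict hx hy hxy hs ht hst
    simp only [smul_eq_mul] at h ⊢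
    nlinarith [mul_lt_mul_of_pos_left h (hw i)]
  constructor
  · intro P hP Q hQ s t hs ht hst i
    simp only [Pi.add_apply, Pi.smul_apply, smul_eq_mul]
    have := hP i; have := hQ i
    positivity
  · intro P hP Q hQ hPQ s t hs ht hst
    obtain ⟨j, hj⟩ : ∃ j, P j ≠ Q j := Function.ne_iff.mp hPQ
    simp only [Pi.add_apply, Pi.smul_apply, smul_eq_mul]
    rw [Finset.mul_sum, Finset.mul_sum, ← Finset.sum_add_distrib]
    apply Finset.sum_lt_sum
    · intro i _
      have := (hg i).concaveOn.2 (hP i) (hQ i) hs.le ht.le hst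
      simpa [smul_eq_mul, mul_comm] using this
    · refine ⟨j, Finset.mem_univ j, ?_⟩
      have := (hg j).2 (hP j) (hQ j) hj hs ht hst
      simpa [smul_eq_mul, mul_comm] using this
end

section
/- Let ι be a finite nonempty index set, w : ι → ℝ with w i > 0 for all i, a, b : ι → ℝ with a i > b i > 0 for all i, and let P̄ > 0. Define F(P) = Σ_{i ∈ ι} w i · (log(1 + a i · P i) − log(1 + b i · P i)) and the feasible set K = {P : ι → ℝ | (∀ i, P i ≥ 0) ∧ Σ_i w i · P i ≤ P̄}. If P* ∈ K attains the maximum of F over K, then Σ_i w i · P*_i = P̄. -/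
lemma stmt_7_mono (a b t s : ℝ) (hb : 0 < b) (hba : b < a) (ht : 0 ≤ t)
    (hts : t < s) :
    Real.log (1 + a * t) - Real.log (1 + b * t)
      < Real.log (1 + a * s) - Real.log (1 + b * s) := by
  have ha : 0 < a := hb.trans hba
  have h1 : 0 < 1 + a * t := by nlinarith
  have h2 : 0 < 1 + b * t := by nlinarith
  have hs : 0 < s := ht.trans_lt hts
  have h3 : 0 < 1 + a * s := by nlinarith
  have h4 : 0 < 1 + b * s := by nlinarith
  have key : (1 + a * t) * (1 + b * s) < (1 + a * s) * (1 + b * t) := by nlinarith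
  have := Real.log_lt_log (by positivity) key
  rw [Real.log_mul h1.ne' h4.ne', Real.log_mul h3.ne' h2.ne'] at this
  linarith

theorem stmt_7 {ι : Type*} [Fintype ι] [Nonempty ι] (w a b : ι → ℝ) (Pbar : ℝ)
    (hw : ∀ i, 0 < w i) (hb : ∀ i, 0 < b i) (hba : ∀ i, b i < a i)
    (hPbar : 0 < Pbar)
    (F : (ι → ℝ) → ℝ)
    (hF : F = fun P : ι → ℝ =>
      ∑ i, w i * (Real.log (1 + a i * P i) - Real.log (1 + b i * P i)))
    (K : Set (ι → ℝ))
    (hK : K = {P : ι → ℝ | (∀ i, 0 ≤ P i) ∧ ∑ i, w i * P i ≤ Pbar})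
    (Pstar : ι → ℝ) (hmem : Pstar ∈ K) (hmax : ∀ Q ∈ K, F Q ≤ F Pstar) :
    ∑ i, w i * Pstar i = Pbar := by
  subst hF hK
  obtain ⟨hpos, hsum⟩ := hmem
  by_contra hne
  have hS : ∑ i, w i * Pstar i < Pbar := lt_of_le_of_ne hsum hne
  classical
  set i0 : ι := Classical.arbitrary ι with hi0
  set ε : ℝ := (Pbar - ∑ i, w i * Pstar i) / w i0 with hε
  have hε0 : 0 < ε := div_pos (by linarith) (hw i0)
  set Q : ι → ℝ := Function.update Pstar i0 (Pstar i0 + ε) with hQ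
  have hQj : ∀ j, j ≠ i0 → Q j = Pstar j := fun j hj =>
    Function.update_of_ne hj _ _
  have hQi : Q i0 = Pstar i0 + ε := Function.update_self _ _ _
  have key : ∀ g : ι → ℝ, ∑ j, g j = g i0 + ∑ j ∈ Finset.univ.erase i0, g j :=
    fun g => (Finset.add_sum_erase _ g (Finset.mem_univ i0)).symm
  have hQsum : ∑ j, w j * Q j = Pbar := by
    have herase : ∑ j ∈ Finset.univ.erase i0, w j * Q j
        = ∑ j ∈ Finset.univ.erase i0, w j * Pstar j := by
      refine Finset.sum_congr rfl fun j hj => ?_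
      rw [hQj j (Finset.ne_of_mem_erase hj)]
    have hsplit := key (fun j => w j * Pstar j)
    have hwe : w i0 * ε = Pbar - ∑ i, w i * Pstar i := by
      rw [hε]; field_simp; exact div_self (hw i0).ne'
    rw [key (fun j => w j * Q j), herase, hQi]
    linarith [mul_add (w i0) (Pstar i0) ε]
  have hQpos : ∀ j, 0 ≤ Q j := by
    intro j
    by_cases hj : j = i0
    · rw [hj, hQi]; have := hpos i0; linarith
    · rw [hQj j hj]; exact hpos j
  have hQK : Q ∈ {P : ι → ℝ | (∀ i, 0 ≤ P i) ∧ ∑ i, w i * P i ≤ Pbar} :=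
    ⟨hQpos, le_of_eq hQsum⟩
  have hle := hmax Q hQK
  have hlt : (fun P : ι → ℝ =>
      ∑ i, w i * (Real.log (1 + a i * P i) - Real.log (1 + b i * P i))) Pstar
      < (fun P : ι → ℝ =>
      ∑ i, w i * (Real.log (1 + a i * P i) - Real.log (1 + b i * P i))) Q := by
    simp only
    rw [key (fun j => w j * (Real.log (1 + a j * Q j) - Real.log (1 + b j * Q j))),
        key (fun j => w j * (Real.log (1 + a j * Pstar j) - Real.log (1 + b j * Pstar j)))]
    have herase : ∑ j ∈ Finset.univ.erase i0,
        w j * (Real.log (1 + a j * Q j) - Real.log (1 + b j * Q j))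
        = ∑ j ∈ Finset.univ.erase i0,
        w j * (Real.log (1 + a j * Pstar j) - Real.log (1 + b j * Pstar j)) := by
      refine Finset.sum_congr rfl fun j hj => ?_
      rw [hQj j (Finset.ne_of_mem_erase hj)]
    rw [herase, hQi]
    have := stmt_7_mono (a i0) (b i0) (Pstar i0) (Pstar i0 + ε) (hb i0) (hba i0)
      (hpos i0) (by linarith)
    have hwpos := hw i0
    nlinarith [mul_lt_mul_of_pos_left this hwpos]
  exact absurd hle (not_le.mpr hlt)
end
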